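/- For every natural number m and every cost structure C over alphabets α, β with costs in ℕ, the Levenshtein distance computed with all costs scaled by m equals m times the Levenshtein distance computed with C: for all lists Q and R, levenshtein (m • C) Q R = m * levenshtein C Q R, where m • C multiplies every insert, delete, and substitution cost of C by m. -/

import Mathlib

/-- Costs for the Levenshtein distance (removed from Mathlib; restored with its old meaning). -/
structure Levenshtein.Cost (α β δ : Type*) where
  /-- Cost to delete an element from a list. -/
  delete : α → δ
  /-- Cost in insert an element into a list. -/
  insert : β → δ
  /-- Cost to substitute one element for another in a list. -/
  substitute : α → β → δ

/-- (Private) Step of the dynamic program computing the Levenshtein distance, as in old Mathlib. -/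
def Levenshtein.impl {α β δ : Type*} [AddZeroClass δ] [Min δ] (C : Levenshtein.Cost α β δ)
    (xs : List α) (y : β) (d : {r : List δ // 0 < r.length}) : {r : List δ // 0 < r.length} :=
  let ⟨ds, w⟩ := d
  xs.zip (ds.zip ds.tail) |>.foldr
    (init := ⟨[ds.getLast (List.length_pos_iff.mp w) + C.insert y], by simp⟩)
    (fun ⟨x, d₀, d₁⟩ ⟨r, w⟩ =>
      ⟨min (C.delete x + r[0]) (min (C.insert y + d₀) (C.substitute x y + d₁)) :: r, by simp⟩)

/-- Levenshtein distances from each suffix of `xs` to `ys`, as in old Mathlib. -/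
def suffixLevenshtein {α β δ : Type*} [AddZeroClass δ] [Min δ] (C : Levenshtein.Cost α β δ)
    (xs : List α) (ys : List β) : {r : List δ // 0 < r.length} :=
  ys.foldr
    (Levenshtein.impl C xs)
    (xs.foldr (init := ⟨[0], by simp⟩) (fun a ⟨r, w⟩ => ⟨(C.delete a + r[0]) :: r, by simp⟩))

/-- The Levenshtein distance between two lists, as in old Mathlib. -/
def levenshtein {α β δ : Type*} [AddZeroClass δ] [Min δ] (C : Levenshtein.Cost α β δ)
    (xs : List α) (ys : List β) : δ :=
  let ⟨r, w⟩ := suffixLevenshtein C xs ys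
  r[0]

namespace LevAux

variable {α β : Type*} (C : Levenshtein.Cost α β ℕ)

theorem impl_cons {x : α} {xs : List α} {y : β} {d : ℕ} {ds : List ℕ} {w}
    (w' : 0 < List.length ds) :
    Levenshtein.impl C (x :: xs) y ⟨d :: ds, w⟩ =
      let ⟨r, w⟩ := Levenshtein.impl C xs y ⟨ds, w'⟩
      ⟨min (C.delete x + r[0]) (min (C.insert y + d) (C.substitute x y + ds[0])) :: r, by simp⟩ :=
  match ds, w' with | _ :: _, _ => rfl

theorem impl_length {xs : List α} {y : β} (d : {r : List ℕ // 0 < r.length})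
    (w : d.1.length = xs.length + 1) :
    (Levenshtein.impl C xs y d).1.length = xs.length + 1 := by
  induction xs generalizing d with
  | nil => rfl
  | cons x xs ih =>
    match d, w with
    | ⟨d₁ :: d₂ :: ds, _⟩, w =>
      rw [impl_cons C (by simp)]
      simp only [List.length_cons, Nat.add_right_cancel_iff]
      exact ih ⟨d₂ :: ds, (by simp)⟩ (by simpa using w)

theorem suffixLevenshtein_length (xs : List α) (ys : List β) :
    (suffixLevenshtein C xs ys).1.length = xs.length + 1 := by
  induction ys with
  | nil =>
    dsimp [suffixLevenshtein]
    induction xs with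
    | nil => rfl
    | cons _ xs ih =>
      simp_all
  | cons y ys ih =>
    dsimp [suffixLevenshtein]
    rw [impl_length]
    exact ih

theorem suffixLevenshtein_cons₁_aux {α} {x y : { l : List α // 0 < l.length }}
    (w₀ : x.1[0]'x.2 = y.1[0]'y.2) (w : x.1.tail = y.1.tail) : x = y := by
  match x, y with
  | ⟨hx :: tx, _⟩, ⟨hy :: ty, _⟩ => simp_all

theorem suffixLevenshtein_cons₁ (x : α) (xs ys) :
    suffixLevenshtein C (x :: xs) ys =
      ⟨levenshtein C (x :: xs) ys ::
        (suffixLevenshtein C xs ys).1, by simp⟩ := by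
  induction ys with
  | nil => rfl
  | cons y ys ih =>
    apply suffixLevenshtein_cons₁_aux
    · rfl
    · show (Levenshtein.impl C (x :: xs) y (suffixLevenshtein C (x :: xs) ys)).1.tail = _
      rw [ih, impl_cons]
      · rfl
      · simp [suffixLevenshtein_length]

theorem levenshtein_nil_nil : levenshtein C [] [] = 0 := rfl

theorem impl_nil_fst_zero (y : β) (s : {r : List ℕ // 0 < r.length}) (h : s.1.length = 1) :
    (Levenshtein.impl C [] y s).1[0]'(Levenshtein.impl C [] y s).2 = C.insert y + s.1[0]'s.2 := by
  obtain ⟨r, w⟩ := s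
  match r, w, h with
  | [a], _, _ =>
    show a + C.insert y = C.insert y + a
    omega

theorem levenshtein_nil_cons (y : β) (ys : List β) :
    levenshtein C [] (y :: ys) = C.insert y + levenshtein C [] ys := by
  have h : (suffixLevenshtein C [] ys).1.length = 1 := by
    simpa using suffixLevenshtein_length C [] ys
  exact impl_nil_fst_zero C y _ h

theorem levenshtein_cons_nil (x : α) (xs : List α) :
    levenshtein C (x :: xs) [] = C.delete x + levenshtein C xs [] := rfl

theorem impl_cons_fst_zero' {x : α} {xs : List α} {y : β} (d : ℕ)
    (s : {r : List ℕ // 0 < r.length}) (t : {r : List ℕ // 0 < r.length})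
    (ht : t = ⟨d :: s.1, by simp⟩) (h) :
    (Levenshtein.impl C (x :: xs) y t).1[0]'h =
      min (C.delete x + (Levenshtein.impl C xs y s).1[0]'(Levenshtein.impl C xs y s).2)
        (min (C.insert y + d) (C.substitute x y + s.1[0]'s.2)) := by
  subst ht
  obtain ⟨r, w⟩ := s
  match r, w with
  | _ :: _, _ => rfl

theorem levenshtein_cons_cons (x : α) (xs : List α) (y : β) (ys : List β) :
    levenshtein C (x :: xs) (y :: ys) =
      min (C.delete x + levenshtein C xs (y :: ys))
        (min (C.insert y + levenshtein C (x :: xs) ys)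
          (C.substitute x y + levenshtein C xs ys)) :=
  impl_cons_fst_zero' C _ (suffixLevenshtein C xs ys) _ (suffixLevenshtein_cons₁ C x xs ys) _

end LevAux

open LevAux

/-- The cost structure obtained by scaling every insert, delete, and substitution
cost of `C` by the natural number `m`. -/
def Levenshtein.Cost.smul {α β : Type*} (m : ℕ) (C : Levenshtein.Cost α β ℕ) :
    Levenshtein.Cost α β ℕ where
  delete a := m * C.delete a
  insert b := m * C.insert b
  substitute a b := m * C.substitute a b

/-- **Scaling all gap penalties scales the edit distance.**
For every `m : ℕ` and every cost structure `C`, the Levenshtein distance computed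
with all costs scaled by `m` equals `m` times the Levenshtein distance with `C`:
`levenshtein (m • C) Q R = m * levenshtein C Q R` for all lists `Q` and `R`. -/
theorem levenshtein_smul (m : ℕ) {α β : Type*} (C : Levenshtein.Cost α β ℕ)
    (Q : List α) (R : List β) :
    levenshtein (Levenshtein.Cost.smul m C) Q R = m * levenshtein C Q R := by
  induction Q generalizing R with
  | nil =>
    induction R with
    | nil => simp [levenshtein_nil_nil]
    | cons y ys ih =>
      rw [levenshtein_nil_cons, levenshtein_nil_cons, ih, mul_add]
      rfl
  | cons x xs ihQ =>
    induction R with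
    | nil =>
      rw [levenshtein_cons_nil, levenshtein_cons_nil, ihQ, mul_add]
      rfl
    | cons y ys ihR =>
      rw [levenshtein_cons_cons, levenshtein_cons_cons, ihQ, ihQ, ihR]
      simp only [Levenshtein.Cost.smul, ← mul_add, min_mul_mul_left]
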